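/- Let G be a graph with m ≥ 9 edges. If the spectral radius μ(G) of the adjacency matrix of G satisfies μ(G) > √m, then G contains a cycle of length 4. -/

import Mathlib

open Matrix Finset

/-- `μ` is the spectral radius (largest eigenvalue) of the real symmetric matrix `A`. -/
def IsSpecRad {n : ℕ} (A : Matrix (Fin n) (Fin n) ℝ) (μ : ℝ) : Prop :=
  Module.End.HasEigenvalue A.mulVecLin μ ∧
    ∀ ν : ℝ, Module.End.HasEigenvalue A.mulVecLin ν → ν ≤ μ

/-- `G` contains a cycle of length 4. -/
def Has4Cycle {V : Type*} (G : SimpleGraph V) : Prop :=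
  ∃ a b c d : V, G.Adj a b ∧ G.Adj b c ∧ G.Adj c d ∧ G.Adj d a ∧ a ≠ c ∧ b ≠ d

lemma nosal_DC {n : ℕ} (G : SimpleGraph (Fin n)) [DecidableRel G.Adj]
    (S T : Finset (Fin n)) (x : Fin n → ℝ) :
    ∑ w ∈ S, ∑ v ∈ G.neighborFinset w ∩ T, x v
      = ∑ v ∈ T, ((G.neighborFinset v ∩ S).card : ℝ) * x v := by
  have h1 : ∀ w, ∑ v ∈ G.neighborFinset w ∩ T, x v
      = ∑ v ∈ T, if v ∈ G.neighborFinset w then x v else 0 := by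
    intro w
    rw [Finset.sum_ite_mem, Finset.inter_comm]
  simp_rw [h1]
  rw [Finset.sum_comm]
  refine Finset.sum_congr rfl fun v _ => ?_
  have h2 : ∀ w, (if v ∈ G.neighborFinset w then x v else 0)
      = if w ∈ G.neighborFinset v then x v else 0 := by
    intro w
    simp [SimpleGraph.mem_neighborFinset, G.adj_comm]
  simp_rw [h2]
  rw [Finset.sum_ite_mem, Finset.inter_comm, Finset.sum_const, nsmul_eq_mul]

lemma nosal_split {n : ℕ} (G : SimpleGraph (Fin n)) [DecidableRel G.Adj]
    (u : Fin n) (Z : Finset (Fin n))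
    (hZ : Z = univ \ insert u (G.neighborFinset u))
    (s : Finset (Fin n)) (x : Fin n → ℝ) :
    ∑ v ∈ s, x v = (∑ v ∈ s ∩ {u}, x v) + (∑ v ∈ s ∩ G.neighborFinset u, x v)
      + ∑ v ∈ s ∩ Z, x v := by
  classical
  have hdisj1 : Disjoint (s ∩ {u}) (s ∩ G.neighborFinset u) := by
    simp only [Finset.disjoint_left, mem_inter, Finset.mem_singleton]
    rintro a ⟨-, rfl⟩ ⟨-, hmem⟩
    exact G.irrefl ((SimpleGraph.mem_neighborFinset _ _ _).mp hmem)
  have hdisj2 : Disjoint ((s ∩ {u}) ∪ (s ∩ G.neighborFinset u)) (s ∩ Z) := by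
    subst hZ
    simp only [Finset.disjoint_left, mem_union, mem_inter, Finset.mem_singleton,
      Finset.mem_sdiff, Finset.mem_insert, Finset.mem_univ, true_and]
    rintro a (⟨-, rfl⟩ | ⟨-, hmem⟩) ⟨-, hno⟩
    · exact hno (Or.inl rfl)
    · exact hno (Or.inr hmem)
  have hcover : s = ((s ∩ {u}) ∪ (s ∩ G.neighborFinset u)) ∪ (s ∩ Z) := by
    subst hZ
    ext a
    simp only [mem_union, mem_inter, Finset.mem_singleton, Finset.mem_sdiff,
      Finset.mem_insert, Finset.mem_univ, true_and]
    constructor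
    · intro ha
      by_cases h1 : a = u
      · exact Or.inl (Or.inl ⟨ha, h1⟩)
      · by_cases h2 : a ∈ G.neighborFinset u
        · exact Or.inl (Or.inr ⟨ha, h2⟩)
        · exact Or.inr ⟨ha, by tauto⟩
    · rintro ((⟨ha, -⟩ | ⟨ha, -⟩) | ⟨ha, -⟩) <;> exact ha
  conv_lhs => rw [hcover]
  rw [Finset.sum_union hdisj2, Finset.sum_union hdisj1]

set_option maxHeartbeats 1000000 in
theorem nosal_C4 (n : ℕ) (G : SimpleGraph (Fin n)) [DecidableRel G.Adj] (μ : ℝ)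
    (hm : 9 ≤ G.edgeFinset.card)
    (hμ : IsSpecRad (G.adjMatrix ℝ) μ)
    (h : μ > Real.sqrt G.edgeFinset.card) :
    Has4Cycle G := by
  classical
  by_contra hno
  set m : ℝ := (G.edgeFinset.card : ℝ) with hmdef
  have hm9 : (9 : ℝ) ≤ m := by rw [hmdef]; exact_mod_cast hm
  have hsqrt3 : (3 : ℝ) ≤ Real.sqrt m := by
    rw [show (3:ℝ) = Real.sqrt 9 by
      rw [show (9:ℝ) = 3^2 by norm_num, Real.sqrt_sq (by norm_num)]]
    exact Real.sqrt_le_sqrt hm9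
  have hμ3 : 3 ≤ μ := le_trans hsqrt3 h.le
  have hμ0 : 0 ≤ μ := by linarith
  have hμsq : m < μ * μ := by
    have h0 : 0 ≤ Real.sqrt m := Real.sqrt_nonneg m
    calc m = Real.sqrt m * Real.sqrt m := (Real.mul_self_sqrt (by linarith)).symm
    _ < μ * μ := by
      apply mul_lt_mul'' h h h0 h0
  -- eigenvector
  obtain ⟨y, hy⟩ := hμ.1.exists_hasEigenvector
  have hy0 : y ≠ 0 := hy.2
  have hyeq : ∀ v, μ * y v = ∑ w ∈ G.neighborFinset v, y w := by
    intro v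
    have h1 : (G.adjMatrix ℝ).mulVec y = μ • y := by
      simpa [Matrix.mulVecLin_apply] using hy.apply_eq_smul
    have h2 := congrFun h1 v
    rw [SimpleGraph.adjMatrix_mulVec_apply] at h2
    simpa [Pi.smul_apply, smul_eq_mul] using h2.symm
  obtain ⟨v0, hv0⟩ : ∃ v, y v ≠ 0 := Function.ne_iff.mp hy0
  obtain ⟨u, -, hu⟩ := Finset.exists_max_image univ (fun v => |y v|) ⟨v0, mem_univ v0⟩
  have hu' : ∀ v, |y v| ≤ |y u| := fun v => hu v (mem_univ v)
  have hM : 0 < |y u| := lt_of_lt_of_le (abs_pos.mpr hv0) (hu' v0)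
  set x : Fin n → ℝ := fun v => |y v| / |y u| with hxdef
  have hx0 : ∀ v, 0 ≤ x v := fun v => div_nonneg (abs_nonneg _) hM.le
  have hx1 : ∀ v, x v ≤ 1 := fun v => (div_le_one hM).mpr (hu' v)
  have hxu : x u = 1 := div_self hM.ne'
  have hAx : ∀ v, μ * x v ≤ ∑ w ∈ G.neighborFinset v, x w := by
    intro v
    have h1 : μ * x v = |μ * y v| / |y u| := by
      rw [abs_mul, abs_of_nonneg hμ0, hxdef, mul_div_assoc]
    rw [h1, hyeq v]
    rw [show ∑ w ∈ G.neighborFinset v, x w = (∑ w ∈ G.neighborFinset v, |y w|) / |y u| by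
      rw [Finset.sum_div]]
    apply div_le_div_of_nonneg_right ?_ hM.le
    exact Finset.abs_sum_le_sum_abs _ _
  -- combinatorial setup
  set W : Finset (Fin n) := G.neighborFinset u with hWdef
  set Z : Finset (Fin n) := univ \ insert u W with hZdef
  set F : Fin n → ℝ := fun v => ((G.neighborFinset v ∩ W).card : ℝ) with hFdef
  have hF0 : ∀ v, 0 ≤ F v := fun v => Nat.cast_nonneg _
  have hF1 : ∀ v, v ≠ u → F v ≤ 1 := by
    intro v hv
    by_contra hc
    push_neg at hc
    have hc' : 1 < (G.neighborFinset v ∩ W).card := by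
      simp only [hFdef] at hc; exact_mod_cast hc
    obtain ⟨a, ha, b, hb, hab⟩ := Finset.one_lt_card.mp hc'
    rw [Finset.mem_inter, SimpleGraph.mem_neighborFinset, SimpleGraph.mem_neighborFinset] at ha hb
    exact hno ⟨u, a, v, b, ha.2, ha.1.symm, hb.1, hb.2.symm, Ne.symm hv, hab⟩
  have hWu : ∀ w ∈ W, w ≠ u := by
    intro w hw heq
    rw [heq, hWdef] at hw
    exact G.irrefl ((SimpleGraph.mem_neighborFinset _ _ _).mp hw)
  have hZu : ∀ z ∈ Z, z ≠ u := by
    intro z hz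
    rw [hZdef, Finset.mem_sdiff, Finset.mem_insert] at hz
    tauto
  have hNWu : ∀ w ∈ W, G.neighborFinset w ∩ {u} = {u} := by
    intro w hw
    ext a
    simp only [Finset.mem_inter, Finset.mem_singleton, SimpleGraph.mem_neighborFinset,
      and_iff_right_iff_imp]
    rintro rfl
    exact ((SimpleGraph.mem_neighborFinset _ _ _).mp hw).symm
  have hNZu : ∀ z ∈ Z, G.neighborFinset z ∩ {u} = ∅ := by
    intro z hz
    rw [hZdef, Finset.mem_sdiff, Finset.mem_insert] at hz
    ext a
    simp only [Finset.mem_inter, Finset.mem_singleton, SimpleGraph.mem_neighborFinset,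
      Finset.notMem_empty, iff_false, not_and]
    rintro hadj rfl
    exact hz.2 (Or.inr ((SimpleGraph.mem_neighborFinset _ _ _).mpr hadj.symm))
  set P : ℝ := ∑ w ∈ W, F w * x w with hPdef
  set Q : ℝ := ∑ z ∈ Z, F z * x z with hQdef
  set t' : ℝ := ∑ w ∈ W, F w with ht'def
  set s' : ℝ := ∑ z ∈ Z, F z with hs'def
  set g' : ℝ := ∑ z ∈ Z, ((G.neighborFinset z ∩ Z).card : ℝ) with hg'def
  set d : ℝ := (W.card : ℝ) with hddef
  have hP0 : 0 ≤ P := Finset.sum_nonneg fun w _ => mul_nonneg (hF0 w) (hx0 w)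
  have hQ0 : 0 ≤ Q := Finset.sum_nonneg fun z _ => mul_nonneg (hF0 z) (hx0 z)
  have hs'0 : 0 ≤ s' := Finset.sum_nonneg fun z _ => hF0 z
  -- split of each neighbor sum
  have hNS : ∀ (v : Fin n) (xf : Fin n → ℝ), ∑ a ∈ G.neighborFinset v, xf a
      = (∑ a ∈ G.neighborFinset v ∩ {u}, xf a) + (∑ a ∈ G.neighborFinset v ∩ W, xf a)
        + ∑ a ∈ G.neighborFinset v ∩ Z, xf a := by
    intro v xf
    exact nosal_split G u Z hZdef _ xf
  have hDCWW : ∑ w ∈ W, ∑ a ∈ G.neighborFinset w ∩ W, x a = P := by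
    rw [nosal_DC G W W x]
  have hDCWZ : ∑ w ∈ W, ∑ a ∈ G.neighborFinset w ∩ Z, x a = Q := by
    rw [nosal_DC G W Z x]
  -- C1 : μ² ≤ d + P + Q
  have hC1 : μ * μ ≤ d + P + Q := by
    have step1 : μ * μ ≤ ∑ w ∈ W, μ * x w := by
      calc μ * μ = μ * (μ * x u) := by rw [hxu]; ring
      _ ≤ μ * ∑ w ∈ W, x w := by
          apply mul_le_mul_of_nonneg_left _ hμ0
          exact hAx u
      _ = ∑ w ∈ W, μ * x w := Finset.mul_sum _ _ _
    have step2 : ∑ w ∈ W, μ * x w ≤ ∑ w ∈ W, ∑ a ∈ G.neighborFinset w, x a :=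
      Finset.sum_le_sum fun w _ => hAx w
    have step3 : ∑ w ∈ W, ∑ a ∈ G.neighborFinset w, x a = d + P + Q := by
      rw [Finset.sum_congr rfl fun w hw => hNS w x]
      rw [Finset.sum_add_distrib, Finset.sum_add_distrib, hDCWW, hDCWZ]
      congr 1
      congr 1
      rw [Finset.sum_congr rfl fun w hw => by rw [hNWu w hw, Finset.sum_singleton, hxu]]
      rw [Finset.sum_const, nsmul_eq_mul, mul_one]
    linarith
  -- C2 : μ P ≤ t' + P + Q
  have hC2 : μ * P ≤ t' + P + Q := by
    have step1 : μ * P = ∑ w ∈ W, F w * (μ * x w) := by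
      rw [hPdef, Finset.mul_sum]
      exact Finset.sum_congr rfl fun w _ => by ring
    have step2 : ∀ w ∈ W, F w * (μ * x w)
        ≤ F w + ((∑ a ∈ G.neighborFinset w ∩ W, x a) + ∑ a ∈ G.neighborFinset w ∩ Z, x a) := by
      intro w hw
      have h1 : F w * (μ * x w) ≤ F w * (∑ a ∈ G.neighborFinset w, x a) :=
        mul_le_mul_of_nonneg_left (hAx w) (hF0 w)
      have h2 : ∑ a ∈ G.neighborFinset w, x a
          = 1 + ((∑ a ∈ G.neighborFinset w ∩ W, x a) + ∑ a ∈ G.neighborFinset w ∩ Z, x a) := by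
        rw [hNS w x, hNWu w hw, Finset.sum_singleton, hxu]; ring
      have h3 : 0 ≤ (∑ a ∈ G.neighborFinset w ∩ W, x a) + ∑ a ∈ G.neighborFinset w ∩ Z, x a := by
        apply add_nonneg <;> exact Finset.sum_nonneg fun a _ => hx0 a
      have h4 : F w ≤ 1 := hF1 w (hWu w hw)
      calc F w * (μ * x w) ≤ F w * (1 + ((∑ a ∈ G.neighborFinset w ∩ W, x a)
            + ∑ a ∈ G.neighborFinset w ∩ Z, x a)) := by rw [← h2]; exact h1
      _ = F w + F w * ((∑ a ∈ G.neighborFinset w ∩ W, x a)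
            + ∑ a ∈ G.neighborFinset w ∩ Z, x a) := by ring
      _ ≤ F w + 1 * ((∑ a ∈ G.neighborFinset w ∩ W, x a)
            + ∑ a ∈ G.neighborFinset w ∩ Z, x a) := by
          apply add_le_add_right
          exact mul_le_mul_of_nonneg_right h4 h3
      _ = F w + ((∑ a ∈ G.neighborFinset w ∩ W, x a)
            + ∑ a ∈ G.neighborFinset w ∩ Z, x a) := by ring
    calc μ * P = ∑ w ∈ W, F w * (μ * x w) := step1
    _ ≤ ∑ w ∈ W, (F w + ((∑ a ∈ G.neighborFinset w ∩ W, x a)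
          + ∑ a ∈ G.neighborFinset w ∩ Z, x a)) := Finset.sum_le_sum step2
    _ = t' + (P + Q) := by
        rw [Finset.sum_add_distrib, Finset.sum_add_distrib, hDCWW, hDCWZ]
    _ = t' + P + Q := by ring
  -- C3 : μ Q ≤ s' + g'
  have hC3 : μ * Q ≤ s' + g' := by
    have step1 : μ * Q = ∑ z ∈ Z, F z * (μ * x z) := by
      rw [hQdef, Finset.mul_sum]
      exact Finset.sum_congr rfl fun z _ => by ring
    have step2 : ∀ z ∈ Z, F z * (μ * x z) ≤ F z + ((G.neighborFinset z ∩ Z).card : ℝ) := by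
      intro z hz
      have h1 : F z * (μ * x z) ≤ F z * (∑ a ∈ G.neighborFinset z, x a) :=
        mul_le_mul_of_nonneg_left (hAx z) (hF0 z)
      have h2 : ∑ a ∈ G.neighborFinset z, x a
          = (∑ a ∈ G.neighborFinset z ∩ W, x a) + ∑ a ∈ G.neighborFinset z ∩ Z, x a := by
        rw [hNS z x, hNZu z hz, Finset.sum_empty]; ring
      have hb1 : ∑ a ∈ G.neighborFinset z ∩ W, x a ≤ F z := by
        calc ∑ a ∈ G.neighborFinset z ∩ W, x a ≤ ∑ a ∈ G.neighborFinset z ∩ W, 1 :=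
          Finset.sum_le_sum fun a _ => hx1 a
        _ = F z := by rw [Finset.sum_const, nsmul_eq_mul, mul_one]
      have hb2 : ∑ a ∈ G.neighborFinset z ∩ Z, x a ≤ ((G.neighborFinset z ∩ Z).card : ℝ) := by
        calc ∑ a ∈ G.neighborFinset z ∩ Z, x a ≤ ∑ a ∈ G.neighborFinset z ∩ Z, 1 :=
          Finset.sum_le_sum fun a _ => hx1 a
        _ = _ := by rw [Finset.sum_const, nsmul_eq_mul, mul_one]
      have h3 : 0 ≤ ∑ a ∈ G.neighborFinset z, x a :=
        Finset.sum_nonneg fun a _ => hx0 a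
      have h4 : F z ≤ 1 := hF1 z (hZu z hz)
      calc F z * (μ * x z) ≤ F z * (∑ a ∈ G.neighborFinset z, x a) := h1
      _ ≤ 1 * (∑ a ∈ G.neighborFinset z, x a) := mul_le_mul_of_nonneg_right h4 h3
      _ = (∑ a ∈ G.neighborFinset z ∩ W, x a) + ∑ a ∈ G.neighborFinset z ∩ Z, x a := by
          rw [one_mul, h2]
      _ ≤ F z + ((G.neighborFinset z ∩ Z).card : ℝ) := add_le_add hb1 hb2
    calc μ * Q = ∑ z ∈ Z, F z * (μ * x z) := step1
    _ ≤ ∑ z ∈ Z, (F z + ((G.neighborFinset z ∩ Z).card : ℝ)) := Finset.sum_le_sum step2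
    _ = s' + g' := Finset.sum_add_distrib
  -- C4 : 2m = 2d + t' + 2s' + g'
  have hC4 : 2 * m = 2 * d + t' + 2 * s' + g' := by
    have hdeg : ∑ v, (G.degree v : ℝ) = 2 * m := by
      rw [hmdef]
      rw [show (2 : ℝ) * (G.edgeFinset.card : ℝ) = ((2 * G.edgeFinset.card : ℕ) : ℝ) by
        push_cast; ring]
      rw [← G.sum_degrees_eq_twice_card_edges]
      push_cast
      rfl
    have hdegsplit : ∀ v : Fin n, (G.degree v : ℝ)
        = (∑ a ∈ G.neighborFinset v ∩ {u}, (1:ℝ)) + F v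
          + ((G.neighborFinset v ∩ Z).card : ℝ) := by
      intro v
      have : (G.degree v : ℝ) = ∑ a ∈ G.neighborFinset v, (1:ℝ) := by
        rw [Finset.sum_const, nsmul_eq_mul, mul_one, SimpleGraph.card_neighborFinset_eq_degree]
      rw [this, nosal_split G u Z hZdef _ (fun _ => (1:ℝ))]
      congr 1
      · congr 1
        rw [hFdef, Finset.sum_const, nsmul_eq_mul, mul_one]
      · rw [Finset.sum_const, nsmul_eq_mul, mul_one]
    have hWZcount : ∑ w ∈ W, ((G.neighborFinset w ∩ Z).card : ℝ) = s' := by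
      rw [hs'def]
      simp only [hFdef]
      have := nosal_DC G W Z (fun _ => (1:ℝ))
      simp only [mul_one] at this
      rw [← this]
      refine Finset.sum_congr rfl fun w _ => ?_
      rw [Finset.sum_const, nsmul_eq_mul, mul_one]
    have hsplituniv : ∑ v, (G.degree v : ℝ)
        = (G.degree u : ℝ) + (∑ w ∈ W, (G.degree w : ℝ)) + ∑ z ∈ Z, (G.degree z : ℝ) := by
      rw [nosal_split G u Z hZdef univ (fun v => (G.degree v : ℝ))]
      rw [Finset.univ_inter, Finset.univ_inter, Finset.univ_inter, Finset.sum_singleton]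
    have hdu : (G.degree u : ℝ) = d := by
      rw [hddef, hWdef, SimpleGraph.card_neighborFinset_eq_degree]
    have hsumW : ∑ w ∈ W, (G.degree w : ℝ) = d + t' + s' := by
      rw [Finset.sum_congr rfl fun w (hw : w ∈ W) => hdegsplit w]
      rw [Finset.sum_add_distrib, Finset.sum_add_distrib, hWZcount]
      congr 2
      rw [Finset.sum_congr rfl fun w hw => by rw [hNWu w hw, Finset.sum_singleton]]
      rw [Finset.sum_const, nsmul_eq_mul, mul_one]
    have hsumZ : ∑ z ∈ Z, (G.degree z : ℝ) = s' + g' := by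
      rw [Finset.sum_congr rfl fun z (hz : z ∈ Z) => hdegsplit z]
      rw [Finset.sum_add_distrib, Finset.sum_add_distrib]
      rw [Finset.sum_congr rfl fun z hz => by rw [hNZu z hz, Finset.sum_empty]]
      rw [Finset.sum_const_zero, zero_add]
    rw [← hdeg, hsplituniv, hdu, hsumW, hsumZ]
    ring
  -- final contradiction
  have hf1 : 3 * P ≤ μ * P := mul_le_mul_of_nonneg_right hμ3 hP0
  have hf2 : 3 * Q ≤ μ * Q := mul_le_mul_of_nonneg_right hμ3 hQ0
  linarith
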